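/- arXiv:2310.12927 — 9 statements merged into one kernel-verified Lean document; each statement's English description precedes it below -/
import Mathlib

section
/- Let X be a finite nonempty poset, Y a poset, and f, f' : X → Y monotone maps with f(x) ≤ f'(x) for all x ∈ X. Let n be the maximal height of the elements of X and for i ∈ {0,…,n+1} define f_i : X → Y by f_i(x) = f(x) if ht(x) ≤ n−i and f_i(x) = f'(x) if ht(x) > n−i. Then each f_i is monotone and f = f_0 ≤ f_1 ≤ … ≤ f_{n+1} = f', where g ≤ g' means g(x) ≤ g'(x) for all x ∈ X. -/
/-- refining a pointwise inequality `f ≤ f'` of monotone maps on a finite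
nonempty poset into a chain `f = f_0 ≤ f_1 ≤ … ≤ f_{n+1} = f'` of monotone maps,
using the height function `ht`. -/
theorem stmt3 {X Y : Type*} [PartialOrder X] [PartialOrder Y] [Fintype X] [Nonempty X]
    (f f' : X → Y) (hf : Monotone f) (hf' : Monotone f') (hle : ∀ x, f x ≤ f' x)
    -- `ht x` is the largest `k` such that there is a strictly ascending chain
    -- `x_0 < … < x_k = x` in `X`
    (ht : X → ℕ)
    (hht : ∀ (x : X) (k : ℕ),
      (∃ c : Fin (k + 1) → X, StrictMono c ∧ c (Fin.last k) = x) ↔ k ≤ ht x)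
    -- `n` is the maximal height of the elements of `X`
    (n : ℕ) (hn : ∀ x, ht x ≤ n) (hmax : ∃ x, ht x = n)
    -- the interpolating maps `f_i` (for `0 ≤ i ≤ n+1`):
    -- `f_i x = f x` if `ht x ≤ n - i`, and `f_i x = f' x` if `ht x > n - i`
    (F : ℕ → X → Y)
    (hF : ∀ i x, F i x = if (ht x : ℤ) ≤ (n : ℤ) - (i : ℤ) then f x else f' x) :
    (∀ i ≤ n + 1, Monotone (F i)) ∧ F 0 = f ∧ F (n + 1) = f' ∧
      ∀ i ≤ n, ∀ x, F i x ≤ F (i + 1) x := by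
  have key : ∀ x y : X, x < y → ht x < ht y := by
    intro x y hxy
    obtain ⟨c, hc, hcx⟩ := (hht x (ht x)).2 le_rfl
    have : ht x + 1 ≤ ht y := by
      rw [← hht y (ht x + 1)]
      refine ⟨Fin.snoc c y, ?_, by simp⟩
      rw [Fin.strictMono_iff_lt_succ]
      intro i
      induction i using Fin.lastCases with
      | last =>
          simp only [Fin.snoc_castSucc, Fin.succ_last, Fin.snoc_last]
          rw [hcx]; exact hxy
      | cast j =>
          have h1 : (j.castSucc.succ : Fin (ht x + 2)) = (j.succ).castSucc := rfl
          rw [h1, Fin.snoc_castSucc, Fin.snoc_castSucc]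
          exact hc (Fin.castSucc_lt_succ (i := j))
    omega
  refine ⟨?_, ?_, ?_, ?_⟩
  · intro i _ x y hxy
    rcases eq_or_lt_of_le hxy with rfl | hlt
    · exact le_refl _
    · have hk := key x y hlt
      rw [hF, hF]
      split_ifs with h1 h2 h2
      · exact hf hxy
      · exact (hf hxy).trans (hle y)
      · omega
      · exact hf' hxy
  · funext x
    rw [hF]
    have := hn x
    rw [if_pos (by push_cast; omega)]
  · funext x
    rw [hF]
    rw [if_neg (by push_cast; omega)]
  · intro i hi x
    rw [hF, hF]
    split_ifs with h1 h2 h2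
    · exact le_refl _
    · exact hle x
    · omega
    · exact le_refl _
end

section
/- Let (X,l) and (Y,m) be A-monomial posets with X finite and nonempty, and let (f,λ) ≤ (f',λ') be morphisms (X,l) → (Y,m). Let n be the maximal height of elements of X and for i ∈ {0,…,n+1} define f_i(x) = f(x) and λ_i(x) = λ(x) if ht(x) ≤ n−i, and f_i(x) = f'(x) and λ_i(x) = λ'(x) if ht(x) > n−i. Then each pair (f_i,λ_i) is a morphism (X,l) → (Y,m) of A-monomial posets and (f,λ) = (f_0,λ_0) ≤ (f_1,λ_1) ≤ … ≤ (f_{n+1},λ_{n+1}) = (f',λ'). -/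
/-- An `A`-monomial structure on the poset `X`. -/
def IsMonomialPoset {A X : Type*} [Group A] [PartialOrder X] (l : X → X → A) : Prop :=
  (∀ x x' x'' : X, x ≤ x' → x' ≤ x'' → l x' x'' * l x x' = l x x'') ∧ ∀ x : X, l x x = 1

/-- `p = (f, λ)` is a morphism of `A`-monomial posets `(X,l) → (Y,m)`. -/
def IsPHom {A X Y : Type*} [Group A] [PartialOrder X] [PartialOrder Y]
    (l : X → X → A) (m : Y → Y → A) (p : (X → Y) × (X → A)) : Prop :=
  Monotone p.1 ∧ ∀ x x' : X, x ≤ x' → m (p.1 x) (p.1 x') * p.2 x = p.2 x' * l x x'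

/-- The relation `(f,λ) ≤ (f',λ')` on morphisms of `A`-monomial posets. -/
def PLe {A X Y : Type*} [Group A] [PartialOrder X] [PartialOrder Y]
    (m : Y → Y → A) (p q : (X → Y) × (X → A)) : Prop :=
  (∀ x, p.1 x ≤ q.1 x) ∧ ∀ x, m (p.1 x) (q.1 x) * p.2 x = q.2 x

/-- refining `(f,λ) ≤ (f',λ')` in `Hom((X,l),(Y,m))`, for `X` finite and
nonempty, into a chain `(f,λ) = (f_0,λ_0) ≤ … ≤ (f_{n+1},λ_{n+1}) = (f',λ')` of morphisms. -/
theorem stmt4 {A X Y : Type*} [Group A] [PartialOrder X] [PartialOrder Y]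
    [Fintype X] [Nonempty X]
    (l : X → X → A) (m : Y → Y → A)
    (hl : IsMonomialPoset l) (hm : IsMonomialPoset m)
    (f f' : X → Y) (lam lam' : X → A)
    (hp : IsPHom l m (f, lam)) (hp' : IsPHom l m (f', lam'))
    (hle : PLe m (f, lam) (f', lam'))
    -- `ht x` is the largest `k` such that there is a strictly ascending chain
    -- `x_0 < … < x_k = x` in `X`
    (ht : X → ℕ)
    (hht : ∀ (x : X) (k : ℕ),
      (∃ c : Fin (k + 1) → X, StrictMono c ∧ c (Fin.last k) = x) ↔ k ≤ ht x)
    -- `n` is the maximal height of the elements of `X`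
    (n : ℕ) (hn : ∀ x, ht x ≤ n) (hmax : ∃ x, ht x = n)
    -- the interpolating data `(f_i, λ_i)` for `0 ≤ i ≤ n+1`
    (F : ℕ → X → Y) (L : ℕ → X → A)
    (hF : ∀ i x, F i x = if (ht x : ℤ) ≤ (n : ℤ) - (i : ℤ) then f x else f' x)
    (hL : ∀ i x, L i x = if (ht x : ℤ) ≤ (n : ℤ) - (i : ℤ) then lam x else lam' x) :
    (∀ i ≤ n + 1, IsPHom l m (F i, L i)) ∧
      (F 0, L 0) = (f, lam) ∧ (F (n + 1), L (n + 1)) = (f', lam') ∧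
      ∀ i ≤ n, PLe m (F i, L i) (F (i + 1), L (i + 1)) := by
  -- height is strictly monotone
  have htstrict : ∀ x x' : X, x < x' → ht x < ht x' := by
    intro x x' hxx'
    obtain ⟨c, hc, hcl⟩ := (hht x (ht x)).mpr le_rfl
    have : ht x + 1 ≤ ht x' := by
      refine (hht x' (ht x + 1)).mp ?_
      refine ⟨fun i => if h : (i : ℕ) < ht x + 1 then c ⟨i, h⟩ else x', ?_, ?_⟩
      · intro i j hij
        by_cases hi : (i : ℕ) < ht x + 1 <;> by_cases hj : (j : ℕ) < ht x + 1
        · simp only [dif_pos hi, dif_pos hj]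
          exact hc (by simpa using hij)
        · simp only [dif_pos hi, dif_neg hj]
          calc c ⟨i, hi⟩ ≤ c (Fin.last (ht x)) := hc.monotone (by
              simp [Fin.le_def]; omega)
            _ = x := hcl
            _ < x' := hxx'
        · exact absurd (hij.trans_le (by omega : (j:ℕ) ≤ (i:ℕ))) (lt_irrefl _)
        · omega
      · simp
    omega
  have htmono : ∀ x x' : X, x ≤ x' → ht x ≤ ht x' := by
    intro x x' h
    rcases h.lt_or_eq with h | h
    · exact (htstrict x x' h).le
    · rw [h]
  -- mixed morphism relation
  have hmix : ∀ x x' : X, x ≤ x' → m (f x) (f' x') * lam x = lam' x' * l x x' := by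
    intro x x' h
    have h3 : m (f' x) (f' x') * m (f x) (f' x) = m (f x) (f' x') :=
      hm.1 _ _ _ (hle.1 x) (hp'.1 h)
    calc m (f x) (f' x') * lam x
        = m (f' x) (f' x') * (m (f x) (f' x) * lam x) := by rw [← h3, mul_assoc]
      _ = m (f' x) (f' x') * lam' x := by rw [hle.2 x]
      _ = lam' x' * l x x' := hp'.2 x x' h
  refine ⟨?_, ?_, ?_, ?_⟩
  · intro i _
    constructor
    · intro x x' h
      simp only [hF]
      split_ifs with h1 h2 h2
      · exact hp.1 h
      · exact (hle.1 x).trans (hp'.1 h)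
      · exact absurd (htmono x x' h) (by omega)
      · exact hp'.1 h
    · intro x x' h
      simp only [hF, hL]
      split_ifs with h1 h2 h2
      · exact hp.2 x x' h
      · exact hmix x x' h
      · exact absurd (htmono x x' h) (by omega)
      · exact hp'.2 x x' h
  · refine Prod.ext (funext fun x => ?_) (funext fun x => ?_) <;>
      simp only [hF, hL] <;> rw [if_pos (by have := hn x; push_cast; omega)]
  · refine Prod.ext (funext fun x => ?_) (funext fun x => ?_) <;>
      simp only [hF, hL] <;> rw [if_neg (by have := hn x; push_cast; omega)]
  · intro i hi
    constructor
    · intro x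
      simp only [hF]
      split_ifs with h1 h2 h2
      · exact le_rfl
      · exact hle.1 x
      · exact absurd h2 (by push_cast at h1 ⊢; omega)
      · exact le_rfl
    · intro x
      simp only [hF, hL]
      split_ifs with h1 h2 h2
      · rw [hm.2, one_mul]
      · exact hle.2 x
      · exact absurd h2 (by push_cast at h1 ⊢; omega)
      · rw [hm.2, one_mul]
end

section
/- Let (S,𝒮,l) and (T,𝒯,m) be A-monomial simplicial complexes and let f, f' : (S,𝒮) → (T,𝒯) be contiguous simplicial maps. Then the family ι(σ) := m(f'(σ), f(σ)∪f'(σ))⁻¹·m(f(σ), f(σ)∪f'(σ)) is natural, i.e., for all σ ⊆ σ' in 𝒮 one has m(f'(σ), f'(σ'))·ι(σ) = ι(σ')·m(f(σ), f(σ')). -/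
/-- `𝒮` is (the set of simplices of) a simplicial complex on the vertex set `S`. -/
def IsSComplex {S : Type*} (𝒮 : Set (Finset S)) : Prop :=
  (∀ σ ∈ 𝒮, σ.Nonempty) ∧ (∀ s : S, ({s} : Finset S) ∈ 𝒮) ∧
    ∀ σ ∈ 𝒮, ∀ τ : Finset S, τ ⊆ σ → τ.Nonempty → τ ∈ 𝒮

/-- `(S,𝒮,l)` is an `A`-monomial simplicial complex. -/
def IsMonomialSC {A S : Type*} [Group A]
    (𝒮 : Set (Finset S)) (l : Finset S → Finset S → A) : Prop :=
  IsSComplex 𝒮 ∧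
    (∀ σ τ υ : Finset S, σ ∈ 𝒮 → τ ∈ 𝒮 → υ ∈ 𝒮 → σ ⊆ τ → τ ⊆ υ →
      l τ υ * l σ τ = l σ υ) ∧
    ∀ σ ∈ 𝒮, l σ σ = 1

/-- `p = (f,λ)` is a morphism of `A`-monomial simplicial complexes
`(S,𝒮,l) → (T,𝒯,m)`. -/
def IsSHom {A S T : Type*} [Group A] [DecidableEq T]
    (𝒮 : Set (Finset S)) (𝒯 : Set (Finset T))
    (l : Finset S → Finset S → A) (m : Finset T → Finset T → A)
    (p : (S → T) × (Finset S → A)) : Prop :=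
  (∀ σ ∈ 𝒮, σ.image p.1 ∈ 𝒯) ∧
    ∀ σ τ : Finset S, σ ∈ 𝒮 → τ ∈ 𝒮 → σ ⊆ τ →
      m (σ.image p.1) (τ.image p.1) * p.2 σ = p.2 τ * l σ τ

/-- Contiguity `(f,λ) − (f',λ')` of morphisms of `A`-monomial simplicial complexes. -/
def SContig {A S T : Type*} [Group A] [DecidableEq T]
    (𝒮 : Set (Finset S)) (𝒯 : Set (Finset T)) (m : Finset T → Finset T → A)
    (p q : (S → T) × (Finset S → A)) : Prop :=
  (∀ σ ∈ 𝒮, σ.image p.1 ∪ σ.image q.1 ∈ 𝒯) ∧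
    ∀ σ ∈ 𝒮, m (σ.image p.1) (σ.image p.1 ∪ σ.image q.1) * p.2 σ
      = m (σ.image q.1) (σ.image p.1 ∪ σ.image q.1) * q.2 σ

/-- The natural transformation `ι_{f−f',m}` associated to contiguous simplicial maps. -/
def SIota {A S T : Type*} [Group A] [DecidableEq T]
    (m : Finset T → Finset T → A) (f f' : S → T) (σ : Finset S) : A :=
  (m (σ.image f') (σ.image f ∪ σ.image f'))⁻¹ * m (σ.image f) (σ.image f ∪ σ.image f')

/-- for contiguous simplicial maps `f − f'` between `A`-monomial simplicial
complexes, the family `ι(σ) = m(f'(σ), f(σ)∪f'(σ))⁻¹ · m(f(σ), f(σ)∪f'(σ))` is natural. -/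
theorem stmt5 {A S T : Type*} [Group A] [DecidableEq T]
    (𝒮 : Set (Finset S)) (𝒯 : Set (Finset T))
    (l : Finset S → Finset S → A) (m : Finset T → Finset T → A)
    (hl : IsMonomialSC 𝒮 l) (hm : IsMonomialSC 𝒯 m)
    (f f' : S → T)
    (hf : ∀ σ ∈ 𝒮, σ.image f ∈ 𝒯) (hf' : ∀ σ ∈ 𝒮, σ.image f' ∈ 𝒯)
    (hc : ∀ σ ∈ 𝒮, σ.image f ∪ σ.image f' ∈ 𝒯) :
    ∀ σ σ' : Finset S, σ ∈ 𝒮 → σ' ∈ 𝒮 → σ ⊆ σ' →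
      m (σ.image f') (σ'.image f') * SIota m f f' σ
        = SIota m f f' σ' * m (σ.image f) (σ'.image f) := by
  obtain ⟨-, hmul, -⟩ := hm
  intro σ σ' hσ hσ' hss
  set U := σ.image f ∪ σ.image f' with hUdef
  set U' := σ'.image f ∪ σ'.image f' with hU'def
  have hU : U ∈ 𝒯 := hc σ hσ
  have hU' : U' ∈ 𝒯 := hc σ' hσ'
  have hfs : σ.image f ⊆ σ'.image f := Finset.image_subset_image hss
  have hf's : σ.image f' ⊆ σ'.image f' := Finset.image_subset_image hss
  have hUU' : U ⊆ U' := Finset.union_subset_union hfs hf's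
  have e1 : m U U' * m (σ.image f') U = m (σ.image f') U' :=
    hmul _ _ _ (hf' σ hσ) hU hU' Finset.subset_union_right hUU'
  have e2 : m (σ'.image f') U' * m (σ.image f') (σ'.image f') = m (σ.image f') U' :=
    hmul _ _ _ (hf' σ hσ) (hf' σ' hσ') hU' hf's Finset.subset_union_right
  have e3 : m U U' * m (σ.image f) U = m (σ.image f) U' :=
    hmul _ _ _ (hf σ hσ) hU hU' Finset.subset_union_left hUU'
  have e4 : m (σ'.image f) U' * m (σ.image f) (σ'.image f) = m (σ.image f) U' :=
    hmul _ _ _ (hf σ hσ) (hf σ' hσ') hU' hfs Finset.subset_union_left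
  have L : m (σ.image f') (σ'.image f') = (m (σ'.image f') U')⁻¹ * m (σ.image f') U' := by
    rw [← e2]; group
  have R : m (σ.image f) (σ'.image f) = (m (σ'.image f) U')⁻¹ * m (σ.image f) U' := by
    rw [← e4]; group
  simp only [SIota, ← hUdef, ← hU'def]
  rw [L, R, ← e1, ← e3]
  group
end

section
/- Let (f,λ), (f',λ') : (S,𝒮,l) → (T,𝒯,m) and (e,μ), (e',μ') : (T,𝒯,m) → (R,ℛ,n) be morphisms of A-monomial simplicial complexes. If (f,λ) ∼ (f',λ') and (e,μ) ∼ (e',μ'), then (e,μ)∘(f,λ) ∼ (e',μ')∘(f',λ'). -/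
/-- Contiguity of morphisms of `A`-monomial simplicial complexes, as a relation among
morphisms. -/
def SContigM {A S T : Type*} [Group A] [DecidableEq T]
    (𝒮 : Set (Finset S)) (𝒯 : Set (Finset T))
    (l : Finset S → Finset S → A) (m : Finset T → Finset T → A)
    (p q : (S → T) × (Finset S → A)) : Prop :=
  IsSHom 𝒮 𝒯 l m p ∧ IsSHom 𝒮 𝒯 l m q ∧ SContig 𝒮 𝒯 m p q

/-- Homotopy: the reflexive-transitive closure of contiguity. -/
def SHomotopic {A S T : Type*} [Group A] [DecidableEq T]
    (𝒮 : Set (Finset S)) (𝒯 : Set (Finset T))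
    (l : Finset S → Finset S → A) (m : Finset T → Finset T → A) :
    ((S → T) × (Finset S → A)) → ((S → T) × (Finset S → A)) → Prop :=
  Relation.ReflTransGen (SContigM 𝒮 𝒯 l m)

/-- Composition of morphisms of `A`-monomial simplicial complexes. -/
def SComp {A S T U : Type*} [Group A] [DecidableEq T]
    (q : (T → U) × (Finset T → A)) (p : (S → T) × (Finset S → A)) :
    (S → U) × (Finset S → A) :=
  (q.1 ∘ p.1, fun σ => q.2 (σ.image p.1) * p.2 σ)

lemma comp_isSHom {A S T R : Type*} [Group A] [DecidableEq T] [DecidableEq R]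
    {𝒮 : Set (Finset S)} {𝒯 : Set (Finset T)} {ℛ : Set (Finset R)}
    {l : Finset S → Finset S → A} {m : Finset T → Finset T → A}
    {n : Finset R → Finset R → A}
    {p : (S → T) × (Finset S → A)} {q : (T → R) × (Finset T → A)}
    (hp : IsSHom 𝒮 𝒯 l m p) (hq : IsSHom 𝒯 ℛ m n q) :
    IsSHom 𝒮 ℛ l n (SComp q p) := by
  obtain ⟨hp1, hp2⟩ := hp
  obtain ⟨hq1, hq2⟩ := hq
  constructor
  · intro σ hσ
    have : σ.image (SComp q p).1 = (σ.image p.1).image q.1 := by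
      simp [SComp, Finset.image_image]
    rw [this]
    exact hq1 _ (hp1 σ hσ)
  · intro σ τ hσ hτ hst
    have h1 : σ.image (SComp q p).1 = (σ.image p.1).image q.1 := by
      simp [SComp, Finset.image_image]
    have h2 : τ.image (SComp q p).1 = (τ.image p.1).image q.1 := by
      simp [SComp, Finset.image_image]
    rw [h1, h2]
    show n _ _ * (q.2 (σ.image p.1) * p.2 σ) = (q.2 (τ.image p.1) * p.2 τ) * l σ τ
    rw [← mul_assoc, hq2 _ _ (hp1 σ hσ) (hp1 τ hτ) (Finset.image_subset_image hst),
      mul_assoc, hp2 σ τ hσ hτ hst, mul_assoc]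

lemma contigM_right {A S T R : Type*} [Group A] [DecidableEq T] [DecidableEq R]
    {𝒮 : Set (Finset S)} {𝒯 : Set (Finset T)} {ℛ : Set (Finset R)}
    {l : Finset S → Finset S → A} {m : Finset T → Finset T → A}
    {n : Finset R → Finset R → A}
    {p p' : (S → T) × (Finset S → A)} {q : (T → R) × (Finset T → A)}
    (h : SContigM 𝒮 𝒯 l m p p') (hq : IsSHom 𝒯 ℛ m n q) :
    SContigM 𝒮 ℛ l n (SComp q p) (SComp q p') := by
  obtain ⟨hp, hp', hc1, hc2⟩ := h
  refine ⟨comp_isSHom hp hq, comp_isSHom hp' hq, ?_, ?_⟩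
  · intro σ hσ
    have : σ.image (SComp q p).1 ∪ σ.image (SComp q p').1
        = (σ.image p.1 ∪ σ.image p'.1).image q.1 := by
      simp [SComp, Finset.image_union, Finset.image_image]
    rw [this]
    exact hq.1 _ (hc1 σ hσ)
  · intro σ hσ
    have key : σ.image (SComp q p).1 ∪ σ.image (SComp q p').1
        = (σ.image p.1 ∪ σ.image p'.1).image q.1 := by
      simp [SComp, Finset.image_union, Finset.image_image]
    have e1 : σ.image (SComp q p).1 = (σ.image p.1).image q.1 := by
      simp [SComp, Finset.image_image]
    have e2 : σ.image (SComp q p').1 = (σ.image p'.1).image q.1 := by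
      simp [SComp, Finset.image_image]
    rw [key, e1, e2]
    show n _ _ * (q.2 (σ.image p.1) * p.2 σ) = n _ _ * (q.2 (σ.image p'.1) * p'.2 σ)
    have hτ : σ.image p.1 ∪ σ.image p'.1 ∈ 𝒯 := hc1 σ hσ
    rw [← mul_assoc, ← mul_assoc,
      hq.2 _ _ (hp.1 σ hσ) hτ Finset.subset_union_left,
      hq.2 _ _ (hp'.1 σ hσ) hτ Finset.subset_union_right,
      mul_assoc, mul_assoc, hc2 σ hσ]

lemma contigM_left {A S T R : Type*} [Group A] [DecidableEq T] [DecidableEq R]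
    {𝒮 : Set (Finset S)} {𝒯 : Set (Finset T)} {ℛ : Set (Finset R)}
    {l : Finset S → Finset S → A} {m : Finset T → Finset T → A}
    {n : Finset R → Finset R → A}
    {p : (S → T) × (Finset S → A)} {q q' : (T → R) × (Finset T → A)}
    (h : SContigM 𝒯 ℛ m n q q') (hp : IsSHom 𝒮 𝒯 l m p) :
    SContigM 𝒮 ℛ l n (SComp q p) (SComp q' p) := by
  obtain ⟨hq, hq', hc1, hc2⟩ := h
  have e : ∀ (r : (T → R) × (Finset T → A)) (σ : Finset S),
      σ.image (SComp r p).1 = (σ.image p.1).image r.1 := by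
    intro r σ; simp [SComp, Finset.image_image]
  refine ⟨comp_isSHom hp hq, comp_isSHom hp hq', ?_, ?_⟩
  · intro σ hσ
    rw [e q, e q']
    exact hc1 _ (hp.1 σ hσ)
  · intro σ hσ
    rw [e q, e q']
    show n _ _ * (q.2 (σ.image p.1) * p.2 σ) = n _ _ * (q'.2 (σ.image p.1) * p.2 σ)
    rw [← mul_assoc, ← mul_assoc, hc2 _ (hp.1 σ hσ)]

/-- composition of morphisms of `A`-monomial simplicial complexes preserves
homotopy. -/
theorem stmt9 {A S T R : Type*} [Group A] [DecidableEq T] [DecidableEq R]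
    (𝒮 : Set (Finset S)) (𝒯 : Set (Finset T)) (ℛ : Set (Finset R))
    (l : Finset S → Finset S → A) (m : Finset T → Finset T → A)
    (n : Finset R → Finset R → A)
    (hl : IsMonomialSC 𝒮 l) (hm : IsMonomialSC 𝒯 m) (hn : IsMonomialSC ℛ n)
    (p p' : (S → T) × (Finset S → A)) (q q' : (T → R) × (Finset T → A))
    (hp : IsSHom 𝒮 𝒯 l m p) (hp' : IsSHom 𝒮 𝒯 l m p')
    (hq : IsSHom 𝒯 ℛ m n q) (hq' : IsSHom 𝒯 ℛ m n q')
    (h1 : SHomotopic 𝒮 𝒯 l m p p') (h2 : SHomotopic 𝒯 ℛ m n q q') :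
    SHomotopic 𝒮 ℛ l n (SComp q p) (SComp q' p') := by

  have H1 : SHomotopic 𝒮 ℛ l n (SComp q p) (SComp q p') := by
    clear h2
    induction h1 with
    | refl => exact Relation.ReflTransGen.refl
    | tail _ hstep ih =>
        exact Relation.ReflTransGen.tail (ih hstep.1) (contigM_right hstep hq)
  have H2 : SHomotopic 𝒮 ℛ l n (SComp q p') (SComp q' p') := by
    clear h1 H1
    induction h2 with
    | refl => exact Relation.ReflTransGen.refl
    | tail _ hstep ih =>
        exact Relation.ReflTransGen.tail (ih hstep.1) (contigM_left hstep hp')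
  exact H1.trans H2
end

section
/- Let (X,l) and (Y,m) be A-monomial posets with X finite, and let (f,λ), (f',λ') : (X,l) → (Y,m) be morphisms of A-monomial posets that are homotopic in Poset^A. Then Σ(f,λ) and Σ(f',λ') are homotopic morphisms Σ(X,l) → Σ(Y,m) of A-monomial simplicial complexes. -/
/-- Two morphisms of `A`-monomial posets are comparable: `p ≤ q` or `q ≤ p`. -/
def PComparable {A X Y : Type*} [Group A] [PartialOrder X] [PartialOrder Y]
    (l : X → X → A) (m : Y → Y → A) (p q : (X → Y) × (X → A)) : Prop :=
  IsPHom l m p ∧ IsPHom l m q ∧ (PLe m p q ∨ PLe m q p)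

/-- Homotopy of morphisms of `A`-monomial posets. -/
def PHomotopic {A X Y : Type*} [Group A] [PartialOrder X] [PartialOrder Y]
    (l : X → X → A) (m : Y → Y → A) :
    ((X → Y) × (X → A)) → ((X → Y) × (X → A)) → Prop :=
  Relation.ReflTransGen (PComparable l m)

/-- `Σ(X)`: the set of nonempty finite totally ordered subsets (chains) of the poset `X`. -/
def SigmaSet (X : Type*) [PartialOrder X] : Set (Finset X) :=
  {σ | σ.Nonempty ∧ ∀ x ∈ σ, ∀ y ∈ σ, x ≤ y ∨ y ≤ x}

section Aux

variable {A X Y : Type*} [Group A] [PartialOrder X] [PartialOrder Y] [DecidableEq Y]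

lemma gY_eq (gY : Finset Y → Y) (hgY : ∀ τ ∈ SigmaSet Y, gY τ ∈ τ ∧ ∀ y ∈ τ, y ≤ gY τ)
    {τ : Finset Y} (hτ : τ ∈ SigmaSet Y) {y : Y} (hy : y ∈ τ) (hmax : ∀ z ∈ τ, z ≤ y) :
    gY τ = y :=
  le_antisymm (hmax _ (hgY τ hτ).1) ((hgY τ hτ).2 y hy)

lemma image_chain {f : X → Y} (hf : Monotone f) {σ : Finset X} (hσ : σ ∈ SigmaSet X) :
    σ.image f ∈ SigmaSet Y := by
  refine ⟨hσ.1.image f, ?_⟩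
  intro a ha b hb
  obtain ⟨x, hx, rfl⟩ := Finset.mem_image.1 ha
  obtain ⟨y, hy, rfl⟩ := Finset.mem_image.1 hb
  rcases hσ.2 x hx y hy with h | h
  · exact Or.inl (hf h)
  · exact Or.inr (hf h)

/-- Lemma B : `Σ` of a morphism of monomial posets is a morphism of monomial
simplicial complexes. -/
lemma lemB (l : X → X → A) (m : Y → Y → A)
    (gX : Finset X → X) (hgX : ∀ σ ∈ SigmaSet X, gX σ ∈ σ ∧ ∀ x ∈ σ, x ≤ gX σ)
    (gY : Finset Y → Y) (hgY : ∀ τ ∈ SigmaSet Y, gY τ ∈ τ ∧ ∀ y ∈ τ, y ≤ gY τ)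
    {p : (X → Y) × (X → A)} (hp : IsPHom l m p) :
    IsSHom (SigmaSet X) (SigmaSet Y) (fun σ σ' => l (gX σ) (gX σ'))
      (fun τ τ' => m (gY τ) (gY τ')) (p.1, fun σ => p.2 (gX σ)) := by
  refine ⟨fun σ hσ => image_chain hp.1 hσ, ?_⟩
  intro σ τ hσ hτ hst
  have hσY := image_chain hp.1 hσ
  have hτY := image_chain hp.1 hτ
  have hgσ : gY (σ.image p.1) = p.1 (gX σ) := by
    refine gY_eq gY hgY hσY (Finset.mem_image_of_mem _ (hgX σ hσ).1) ?_
    intro z hz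
    obtain ⟨x, hx, rfl⟩ := Finset.mem_image.1 hz
    exact hp.1 ((hgX σ hσ).2 x hx)
  have hgτ : gY (τ.image p.1) = p.1 (gX τ) := by
    refine gY_eq gY hgY hτY (Finset.mem_image_of_mem _ (hgX τ hτ).1) ?_
    intro z hz
    obtain ⟨x, hx, rfl⟩ := Finset.mem_image.1 hz
    exact hp.1 ((hgX τ hτ).2 x hx)
  have hle : gX σ ≤ gX τ := (hgX τ hτ).2 _ (hst (hgX σ hσ).1)
  simpa [hgσ, hgτ] using hp.2 (gX σ) (gX τ) hle

lemma scontigm_symm {𝒮 : Set (Finset X)} {𝒯 : Set (Finset Y)}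
    {l : Finset X → Finset X → A} {m : Finset Y → Finset Y → A}
    {p q : (X → Y) × (Finset X → A)} (h : SContigM 𝒮 𝒯 l m p q) :
    SContigM 𝒮 𝒯 l m q p := by
  obtain ⟨h1, h2, h3, h4⟩ := h
  refine ⟨h2, h1, fun σ hσ => ?_, fun σ hσ => ?_⟩
  · rw [Finset.union_comm]; exact h3 σ hσ
  · rw [Finset.union_comm]; exact (h4 σ hσ).symm

end Aux

section LemA

variable {A X Y : Type*} [Group A] [PartialOrder X] [PartialOrder Y] [DecidableEq Y]
  [Fintype X]

/-- Lemma A: a single comparability `p ≤ q` of morphisms of monomial posets induces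
an S-homotopy between `Σ p` and `Σ q`. -/
lemma lemA (l : X → X → A) (m : Y → Y → A)
    (hl : IsMonomialPoset l) (hm : IsMonomialPoset m)
    (gX : Finset X → X) (hgX : ∀ σ ∈ SigmaSet X, gX σ ∈ σ ∧ ∀ x ∈ σ, x ≤ gX σ)
    (gY : Finset Y → Y) (hgY : ∀ τ ∈ SigmaSet Y, gY τ ∈ τ ∧ ∀ y ∈ τ, y ≤ gY τ)
    {p q : (X → Y) × (X → A)} (hp : IsPHom l m p) (hq : IsPHom l m q)
    (hpq : PLe m p q) :
    SHomotopic (SigmaSet X) (SigmaSet Y) (fun σ σ' => l (gX σ) (gX σ'))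
      (fun τ τ' => m (gY τ) (gY τ'))
      (p.1, fun σ => p.2 (gX σ)) (q.1, fun σ => q.2 (gX σ)) := by
  classical
  -- strong induction on the number of points where p and q differ
  obtain ⟨n, hn⟩ : ∃ n, (Finset.univ.filter
      (fun x => p.1 x ≠ q.1 x ∨ p.2 x ≠ q.2 x)).card ≤ n := ⟨_, le_rfl⟩
  induction n generalizing p q with
  | zero =>
    -- p = q
    have hpq' : p = q := by
      have key : ∀ x : X, p.1 x = q.1 x ∧ p.2 x = q.2 x := by
        intro x
        by_contra hx
        have : x ∈ Finset.univ.filter (fun x => p.1 x ≠ q.1 x ∨ p.2 x ≠ q.2 x) := by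
          simp only [Finset.mem_filter, Finset.mem_univ, true_and]
          by_contra h'
          push_neg at h'
          exact hx ⟨h'.1, h'.2⟩
        have := Finset.card_pos.2 ⟨x, this⟩
        omega
      exact Prod.ext (funext fun x => (key x).1) (funext fun x => (key x).2)
    rw [hpq']
    exact Relation.ReflTransGen.refl
  | succ n ih =>
    set D := Finset.univ.filter (fun x => p.1 x ≠ q.1 x ∨ p.2 x ≠ q.2 x) with hD
    by_cases hDe : D = ∅
    · -- p = q again
      have key : ∀ x : X, p.1 x = q.1 x ∧ p.2 x = q.2 x := by
        intro x
        by_contra hx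
        have : x ∈ D := by
          rw [hD]
          simp only [Finset.mem_filter, Finset.mem_univ, true_and]
          by_contra h'
          push_neg at h'
          exact hx ⟨h'.1, h'.2⟩
        simp [hDe] at this
      have hpq' : p = q :=
        Prod.ext (funext fun x => (key x).1) (funext fun x => (key x).2)
      rw [hpq']
      exact Relation.ReflTransGen.refl
    · obtain ⟨x0, hx0D, hx0max⟩ : ∃ x0 ∈ D, ∀ y ∈ D, ¬ x0 < y := by
        obtain ⟨x0, hx⟩ := Finset.exists_maximal (Finset.nonempty_of_ne_empty hDe)
        exact ⟨x0, hx.prop, fun y hy hlt => hx.not_gt hy hlt⟩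
      -- points strictly above x0 agree
      have habove : ∀ y : X, x0 ≤ y → y ≠ x0 → p.1 y = q.1 y ∧ p.2 y = q.2 y := by
        intro y hxy hyne
        by_contra hy
        have hyD : y ∈ D := by
          rw [hD]
          simp only [Finset.mem_filter, Finset.mem_univ, true_and]
          by_contra h'
          push_neg at h'
          exact hy ⟨h'.1, h'.2⟩
        exact hx0max y hyD (lt_of_le_of_ne hxy (Ne.symm hyne))
      -- the intermediate morphism r
      set r : (X → Y) × (X → A) :=
        (fun x => if x = x0 then q.1 x else p.1 x,
         fun x => if x = x0 then q.2 x else p.2 x) with hr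
      have hr1 : ∀ x, r.1 x = if x = x0 then q.1 x else p.1 x := fun x => rfl
      have hr2 : ∀ x, r.2 x = if x = x0 then q.2 x else p.2 x := fun x => rfl
      have hrmono : Monotone r.1 := by
        intro x y hxy
        rw [hr1, hr1]
        by_cases hx : x = x0
        · by_cases hy : y = x0
          · rw [if_pos hx, if_pos hy, hx, hy]
          · rw [if_pos hx, if_neg hy, (habove y (hx ▸ hxy) hy).1]
            exact hq.1 hxy
        · by_cases hy : y = x0
          · rw [if_neg hx, if_pos hy]
            exact le_trans (hp.1 hxy) (hpq.1 y)
          · rw [if_neg hx, if_neg hy]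
            exact hp.1 hxy
      have hrhom : IsPHom l m r := by
        refine ⟨hrmono, ?_⟩
        intro x x' hxx'
        rw [hr1, hr1, hr2, hr2]
        by_cases hx : x = x0
        · by_cases hx' : x' = x0
          · have hxe : x = x' := hx.trans hx'.symm
            simp only [if_pos hx, if_pos hx']
            rw [← hxe, hm.2, hl.2, one_mul, mul_one]
          · simp only [if_pos hx, if_neg hx']
            rw [(habove x' (hx ▸ hxx') hx').1, (habove x' (hx ▸ hxx') hx').2]
            exact hq.2 x x' hxx'
        · by_cases hx' : x' = x0
          · simp only [if_neg hx, if_pos hx']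
            have hc : m (p.1 x') (q.1 x') * m (p.1 x) (p.1 x') = m (p.1 x) (q.1 x') :=
              hm.1 _ _ _ (hp.1 hxx') (hpq.1 x')
            calc m (p.1 x) (q.1 x') * p.2 x
                = m (p.1 x') (q.1 x') * (m (p.1 x) (p.1 x') * p.2 x) := by
                  rw [← mul_assoc, hc]
              _ = m (p.1 x') (q.1 x') * (p.2 x' * l x x') := by rw [hp.2 x x' hxx']
              _ = (m (p.1 x') (q.1 x') * p.2 x') * l x x' := by rw [mul_assoc]
              _ = q.2 x' * l x x' := by rw [hpq.2 x']
          · simp only [if_neg hx, if_neg hx']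
            exact hp.2 x x' hxx'
      have hpr : PLe m p r := by
        constructor
        · intro x
          rw [hr1]
          by_cases hx : x = x0
          · simp only [if_pos hx]; exact hpq.1 x
          · simp [hx]
        · intro x
          rw [hr1, hr2]
          by_cases hx : x = x0
          · simp only [if_pos hx]; exact hpq.2 x
          · simp [hx, hm.2]
      have hrq : PLe m r q := by
        constructor
        · intro x
          rw [hr1]
          by_cases hx : x = x0
          · simp [hx]
          · simp [hx]; exact hpq.1 x
        · intro x
          rw [hr1, hr2]
          by_cases hx : x = x0
          · simp [hx, hm.2]
          · simp [hx]; exact hpq.2 x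
      -- comparability claim for unions of images
      have hcomp : ∀ σ ∈ SigmaSet X, ∀ y ∈ σ, ∀ z ∈ σ,
          p.1 y ≤ r.1 z ∨ r.1 z ≤ p.1 y := by
        intro σ hσ y hy z hz
        rcases hσ.2 y hy z hz with hyz | hzy
        · exact Or.inl (le_trans (hp.1 hyz) (hpr.1 z))
        · by_cases hzx : z = x0
          · by_cases hyx : y = x0
            · left
              rw [hyx, hzx]
              exact hpr.1 x0
            · right
              rw [hr1, if_pos hzx, (habove y (hzx ▸ hzy) hyx).1]
              exact hq.1 hzy
          · right
            rw [hr1, if_neg hzx]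
            exact hp.1 hzy
      -- the union of images of a chain is a chain
      have hunion : ∀ σ ∈ SigmaSet X, σ.image p.1 ∪ σ.image r.1 ∈ SigmaSet Y := by
        intro σ hσ
        constructor
        · exact Finset.Nonempty.mono Finset.subset_union_left (hσ.1.image p.1)
        · intro a ha b hb
          rw [Finset.mem_union] at ha hb
          rcases ha with ha | ha <;> rcases hb with hb | hb
          · exact (image_chain hp.1 hσ).2 a ha b hb
          · obtain ⟨y, hy, rfl⟩ := Finset.mem_image.1 ha
            obtain ⟨z, hz, rfl⟩ := Finset.mem_image.1 hb
            exact hcomp σ hσ y hy z hz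
          · obtain ⟨y, hy, rfl⟩ := Finset.mem_image.1 hb
            obtain ⟨z, hz, rfl⟩ := Finset.mem_image.1 ha
            exact (hcomp σ hσ y hy z hz).symm
          · exact (image_chain hrmono hσ).2 a ha b hb
      -- the single contiguity step Σp − Σr
      have hstep : SContigM (SigmaSet X) (SigmaSet Y)
          (fun σ σ' => l (gX σ) (gX σ')) (fun τ τ' => m (gY τ) (gY τ'))
          (p.1, fun σ => p.2 (gX σ)) (r.1, fun σ => r.2 (gX σ)) := by
        refine ⟨lemB l m gX hgX gY hgY hp, lemB l m gX hgX gY hgY hrhom,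
          hunion, ?_⟩
        intro σ hσ
        have hxb := hgX σ hσ
        have hgp : gY (σ.image p.1) = p.1 (gX σ) := by
          refine gY_eq gY hgY (image_chain hp.1 hσ)
            (Finset.mem_image_of_mem _ hxb.1) ?_
          intro z hz
          obtain ⟨x, hx, rfl⟩ := Finset.mem_image.1 hz
          exact hp.1 (hxb.2 x hx)
        have hgr : gY (σ.image r.1) = r.1 (gX σ) := by
          refine gY_eq gY hgY (image_chain hrmono hσ)
            (Finset.mem_image_of_mem _ hxb.1) ?_
          intro z hz
          obtain ⟨x, hx, rfl⟩ := Finset.mem_image.1 hz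
          exact hrmono (hxb.2 x hx)
        have hgu : gY (σ.image p.1 ∪ σ.image r.1) = r.1 (gX σ) := by
          refine gY_eq gY hgY (hunion σ hσ)
            (Finset.mem_union_right _ (Finset.mem_image_of_mem _ hxb.1)) ?_
          intro z hz
          rw [Finset.mem_union] at hz
          rcases hz with hz | hz
          · obtain ⟨x, hx, rfl⟩ := Finset.mem_image.1 hz
            exact le_trans (hp.1 (hxb.2 x hx)) (hpr.1 (gX σ))
          · obtain ⟨x, hx, rfl⟩ := Finset.mem_image.1 hz
            exact hrmono (hxb.2 x hx)
        simp only [hgp, hgr, hgu]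
        rw [hm.2, one_mul]
        exact hpr.2 (gX σ)
      -- recursion: r and q differ on fewer points
      have hsub : Finset.univ.filter (fun x => r.1 x ≠ q.1 x ∨ r.2 x ≠ q.2 x)
          ⊆ D.erase x0 := by
        intro x hx
        simp only [Finset.mem_filter, Finset.mem_univ, true_and] at hx
        by_cases hxx : x = x0
        · simp [hxx, hr1, hr2] at hx
        · simp only [hr1, hr2, if_neg hxx] at hx
          refine Finset.mem_erase.2 ⟨hxx, ?_⟩
          rw [hD]
          simp only [Finset.mem_filter, Finset.mem_univ, true_and]
          exact hx
      have hcard : (Finset.univ.filter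
          (fun x => r.1 x ≠ q.1 x ∨ r.2 x ≠ q.2 x)).card ≤ n := by
        have h1 := Finset.card_le_card hsub
        have h2 := Finset.card_erase_of_mem hx0D
        have h3 : D.card ≤ n + 1 := hn
        omega
      exact Relation.ReflTransGen.head hstep (ih hrhom hq hrq hcard)

end LemA

lemma lemMain {A X Y : Type*} [Group A] [PartialOrder X] [PartialOrder Y]
    [Fintype X] [DecidableEq Y]
    (l : X → X → A) (m : Y → Y → A)
    (hl : IsMonomialPoset l) (hm : IsMonomialPoset m)
    (gX : Finset X → X) (hgX : ∀ σ ∈ SigmaSet X, gX σ ∈ σ ∧ ∀ x ∈ σ, x ≤ gX σ)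
    (gY : Finset Y → Y) (hgY : ∀ τ ∈ SigmaSet Y, gY τ ∈ τ ∧ ∀ y ∈ τ, y ≤ gY τ)
    {p q : (X → Y) × (X → A)} (h : PHomotopic l m p q) :
    SHomotopic (SigmaSet X) (SigmaSet Y) (fun σ σ' => l (gX σ) (gX σ'))
      (fun τ τ' => m (gY τ) (gY τ'))
      (p.1, fun σ => p.2 (gX σ)) (q.1, fun σ => q.2 (gX σ)) := by
  induction h with
  | refl => exact Relation.ReflTransGen.refl
  | tail hab hbc ih =>
    obtain ⟨hb, hc, hle | hle⟩ := hbc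
    · exact Relation.ReflTransGen.trans ih
        (lemA l m hl hm gX hgX gY hgY hb hc hle)
    · refine Relation.ReflTransGen.trans ih
        (@Std.Symm.symm _ _ (@Relation.ReflTransGen.symmetric _ _ ⟨fun _ _ hs => scontigm_symm hs⟩) _ _
          (lemA l m hl hm gX hgX gY hgY hc hb hle))

/-- for `X` finite, `Σ` preserves homotopy: if `(f,λ) ∼ (f',λ')` in
`Poset^A`, then `Σ(f,λ) = (f, σ ↦ λ(σ̄))` and `Σ(f',λ') = (f', σ ↦ λ'(σ̄))` are homotopic
morphisms `Σ(X,l) → Σ(Y,m)` in `Simp^A`.  Here `gX`/`gY` pick the greatest element `σ̄` of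
a chain. -/
theorem stmt12 {A X Y : Type*} [Group A] [PartialOrder X] [PartialOrder Y]
    [Fintype X] [DecidableEq Y]
    (l : X → X → A) (m : Y → Y → A)
    (hl : IsMonomialPoset l) (hm : IsMonomialPoset m)
    (gX : Finset X → X) (hgX : ∀ σ ∈ SigmaSet X, gX σ ∈ σ ∧ ∀ x ∈ σ, x ≤ gX σ)
    (gY : Finset Y → Y) (hgY : ∀ τ ∈ SigmaSet Y, gY τ ∈ τ ∧ ∀ y ∈ τ, y ≤ gY τ)
    (f f' : X → Y) (lam lam' : X → A)
    (hp : IsPHom l m (f, lam)) (hp' : IsPHom l m (f', lam'))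
    (h : PHomotopic l m (f, lam) (f', lam')) :
    SHomotopic (SigmaSet X) (SigmaSet Y) (fun σ σ' => l (gX σ) (gX σ'))
      (fun τ τ' => m (gY τ) (gY τ'))
      (f, fun σ => lam (gX σ)) (f', fun σ => lam' (gX σ)) :=
  lemMain l m hl hm gX hgX gY hgY h
end

section
/- Let (X,l) and (Y,m) be A-monomial posets and let (f,λ), (f',λ') : (X,l) → (Y,m) be morphisms of A-monomial posets such that Σ(f,λ) − Σ(f',λ') (the images under Σ are contiguous morphisms of A-monomial simplicial complexes); in particular, for every x ∈ X, f(x) and f'(x) are comparable in Y. Define (f∪f')(x) = f'(x) and (λ∪λ')(x) = λ'(x) if f(x) ≤ f'(x), and (f∪f')(x) = f(x) and (λ∪λ')(x) = λ(x) if f'(x) < f(x). Then (f∪f', λ∪λ') is a morphism (X,l) → (Y,m) of A-monomial posets and (f,λ) ≤ (f∪f', λ∪λ') and (f',λ') ≤ (f∪f', λ∪λ'). -/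
/-- if `Σ(f,λ) − Σ(f',λ')` (the images under `Σ` are contiguous morphisms
`Σ(X,l) → Σ(Y,m)` of `A`-monomial simplicial complexes), then the pair `(f∪f', λ∪λ')`,
given by `(f∪f')(x) = f'(x)`, `(λ∪λ')(x) = λ'(x)` if `f(x) ≤ f'(x)` and
`(f∪f')(x) = f(x)`, `(λ∪λ')(x) = λ(x)` if `f'(x) < f(x)`, is a morphism
`(X,l) → (Y,m)` of `A`-monomial posets with `(f,λ) ≤ (f∪f',λ∪λ')` and
`(f',λ') ≤ (f∪f',λ∪λ')`.  Here `gX`/`gY` pick the greatest element of a chain. -/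
theorem stmt15 {A X Y : Type*} [Group A] [PartialOrder X] [PartialOrder Y] [DecidableEq Y]
    (l : X → X → A) (m : Y → Y → A)
    (hl : IsMonomialPoset l) (hm : IsMonomialPoset m)
    (gX : Finset X → X) (hgX : ∀ σ ∈ SigmaSet X, gX σ ∈ σ ∧ ∀ x ∈ σ, x ≤ gX σ)
    (gY : Finset Y → Y) (hgY : ∀ τ ∈ SigmaSet Y, gY τ ∈ τ ∧ ∀ y ∈ τ, y ≤ gY τ)
    (f f' : X → Y) (lam lam' : X → A)
    (hp : IsPHom l m (f, lam)) (hp' : IsPHom l m (f', lam'))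
    (hc : SContig (SigmaSet X) (SigmaSet Y) (fun τ τ' => m (gY τ) (gY τ'))
      (f, fun σ => lam (gX σ)) (f', fun σ => lam' (gX σ)))
    (F : X → Y) (L : X → A)
    (hFL : ∀ x : X, (f x ≤ f' x → F x = f' x ∧ L x = lam' x) ∧
      (f' x < f x → F x = f x ∧ L x = lam x)) :
    IsPHom l m (F, L) ∧ PLe m (f, lam) (F, L) ∧ PLe m (f', lam') (F, L) := by
  obtain ⟨hmc, hmid⟩ := hm
  have hsing : ∀ x : X, ({x} : Finset X) ∈ SigmaSet X := by
    intro x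
    refine ⟨Finset.singleton_nonempty x, ?_⟩
    intro a ha b hb
    simp only [Finset.mem_singleton] at ha hb
    subst ha; subst hb; exact Or.inl le_rfl
  have hsingY : ∀ y : Y, ({y} : Finset Y) ∈ SigmaSet Y := by
    intro y
    refine ⟨Finset.singleton_nonempty y, ?_⟩
    intro a ha b hb
    simp only [Finset.mem_singleton] at ha hb
    subst ha; subst hb; exact Or.inl le_rfl
  have hgXx : ∀ x : X, gX {x} = x := fun x =>
    Finset.mem_singleton.mp (hgX _ (hsing x)).1
  have hgYy : ∀ y : Y, gY {y} = y := fun y =>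
    Finset.mem_singleton.mp (hgY _ (hsingY y)).1
  have hcomp : ∀ x : X, f x ≤ f' x ∨ f' x < f x := by
    intro x
    have hτ : (({x} : Finset X).image f) ∪ (({x} : Finset X).image f') ∈ SigmaSet Y :=
      hc.1 _ (hsing x)
    simp only [Finset.image_singleton] at hτ
    have hcmp : f x ≤ f' x ∨ f' x ≤ f x :=
      hτ.2 _ (by simp) _ (by simp)
    rcases hcmp with h | h
    · exact Or.inl h
    · rcases lt_or_eq_of_le h with h2 | h2
      · exact Or.inr h2
      · exact Or.inl h2.ge
  have key : ∀ x : X, f x ≤ F x ∧ f' x ≤ F x ∧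
      m (f x) (F x) * lam x = L x ∧ m (f' x) (F x) * lam' x = L x := by
    intro x
    have hτ : (({x} : Finset X).image f) ∪ (({x} : Finset X).image f') ∈ SigmaSet Y :=
      hc.1 _ (hsing x)
    have heq := hc.2 _ (hsing x)
    simp only [Finset.image_singleton] at hτ heq
    rw [hgXx, hgYy, hgYy] at heq
    have hfxmem : f x ∈ ({f x} : Finset Y) ∪ {f' x} := by simp
    have hfx'mem : f' x ∈ ({f x} : Finset Y) ∪ {f' x} := by simp
    obtain ⟨hg1, hg2⟩ := hgY _ hτ
    rcases hcomp x with h | h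
    · obtain ⟨hF, hL⟩ := (hFL x).1 h
      have hgval : gY (({f x} : Finset Y) ∪ {f' x}) = f' x := by
        refine le_antisymm ?_ (hg2 _ hfx'mem)
        rcases Finset.mem_union.mp hg1 with h1 | h1 <;>
          simp only [Finset.mem_singleton] at h1 <;> rw [h1]
        exact h
      rw [hgval] at heq
      refine ⟨by rw [hF]; exact h, by rw [hF], ?_, ?_⟩
      · rw [hF, hL, heq, hmid, one_mul]
      · rw [hF, hL, hmid, one_mul]
    · obtain ⟨hF, hL⟩ := (hFL x).2 h
      have hgval : gY (({f x} : Finset Y) ∪ {f' x}) = f x := by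
        refine le_antisymm ?_ (hg2 _ hfxmem)
        rcases Finset.mem_union.mp hg1 with h1 | h1 <;>
          simp only [Finset.mem_singleton] at h1 <;> rw [h1]
        exact h.le
      rw [hgval] at heq
      refine ⟨by rw [hF], by rw [hF]; exact h.le, ?_, ?_⟩
      · rw [hF, hL, hmid, one_mul]
      · rw [hF, hL, ← heq, hmid, one_mul]
  have hmono : Monotone F := by
    intro x x' hxx'
    rcases hcomp x with h | h
    · rw [((hFL x).1 h).1]
      exact le_trans (hp'.1 hxx') (key x').2.1
    · rw [((hFL x).2 h).1]
      exact le_trans (hp.1 hxx') (key x').1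
  refine ⟨⟨hmono, ?_⟩, ⟨fun x => (key x).1, fun x => (key x).2.2.1⟩,
    ⟨fun x => (key x).2.1, fun x => (key x).2.2.2⟩⟩
  intro x x' hxx'
  rcases hcomp x' with h | h
  · obtain ⟨hF', hL'⟩ := (hFL x').1 h
    calc m (F x) (F x') * L x
        = m (F x) (F x') * (m (f' x) (F x) * lam' x) := by rw [(key x).2.2.2]
      _ = (m (F x) (F x') * m (f' x) (F x)) * lam' x := (mul_assoc _ _ _).symm
      _ = m (f' x) (F x') * lam' x := by rw [hmc _ _ _ (key x).2.1 (hmono hxx')]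
      _ = m (f' x) (f' x') * lam' x := by rw [hF']
      _ = lam' x' * l x x' := hp'.2 x x' hxx'
      _ = L x' * l x x' := by rw [hL']
  · obtain ⟨hF', hL'⟩ := (hFL x').2 h
    calc m (F x) (F x') * L x
        = m (F x) (F x') * (m (f x) (F x) * lam x) := by rw [(key x).2.2.1]
      _ = (m (F x) (F x') * m (f x) (F x)) * lam x := (mul_assoc _ _ _).symm
      _ = m (f x) (F x') * lam x := by rw [hmc _ _ _ (key x).1 (hmono hxx')]
      _ = m (f x) (f x') * lam x := by rw [hF']
      _ = lam x' * l x x' := hp.2 x x' hxx'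
      _ = L x' * l x x' := by rw [hL']
end

section
/- Let (f,λ), (f',λ') : (S,𝒮,l) → (T,𝒯,m) be morphisms of A-monomial simplicial complexes that are homotopic in Simp^A. Then Π(f,λ) and Π(f',λ') are homotopic morphisms Π(S,𝒮,l) → Π(T,𝒯,m) of A-monomial posets. -/
section Aux

variable {A S T : Type*} [Group A] [DecidableEq T]
    (𝒮 : Set (Finset S)) (𝒯 : Set (Finset T))
    (l : Finset S → Finset S → A) (m : Finset T → Finset T → A)

/-- The functor Π on morphisms. -/
def PiMor (p : (S → T) × (Finset S → A)) (hp : ∀ σ ∈ 𝒮, σ.image p.1 ∈ 𝒯) :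
    ({σ : Finset S // σ ∈ 𝒮} → {τ : Finset T // τ ∈ 𝒯}) × ({σ : Finset S // σ ∈ 𝒮} → A) :=
  (fun σ => ⟨σ.1.image p.1, hp σ.1 σ.2⟩, fun σ => p.2 σ.1)

lemma piMor_isPHom (hm : IsMonomialSC 𝒯 m) {p : (S → T) × (Finset S → A)}
    (hp : IsSHom 𝒮 𝒯 l m p) :
    IsPHom (fun σ τ : {σ : Finset S // σ ∈ 𝒮} => l σ.1 τ.1)
      (fun σ τ : {τ : Finset T // τ ∈ 𝒯} => m σ.1 τ.1) (PiMor 𝒮 𝒯 p hp.1) := by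
  constructor
  · intro σ τ hστ
    exact Finset.image_subset_image hστ
  · intro σ τ hστ
    exact hp.2 σ.1 τ.1 σ.2 τ.2 hστ

lemma contig_step (hm : IsMonomialSC 𝒯 m) {p q : (S → T) × (Finset S → A)}
    (h : SContigM 𝒮 𝒯 l m p q) :
    PHomotopic (fun σ τ : {σ : Finset S // σ ∈ 𝒮} => l σ.1 τ.1)
      (fun σ τ : {τ : Finset T // τ ∈ 𝒯} => m σ.1 τ.1)
      (PiMor 𝒮 𝒯 p h.1.1) (PiMor 𝒮 𝒯 q h.2.1.1) := by
  obtain ⟨hp, hq, hunion, hcon⟩ := h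
  -- the middle morphism
  set r : ({σ : Finset S // σ ∈ 𝒮} → {τ : Finset T // τ ∈ 𝒯}) × ({σ : Finset S // σ ∈ 𝒮} → A) :=
    (fun σ => ⟨σ.1.image p.1 ∪ σ.1.image q.1, hunion σ.1 σ.2⟩,
     fun σ => m (σ.1.image p.1) (σ.1.image p.1 ∪ σ.1.image q.1) * p.2 σ.1) with hr
  have hrhom : IsPHom (fun σ τ : {σ : Finset S // σ ∈ 𝒮} => l σ.1 τ.1)
      (fun σ τ : {τ : Finset T // τ ∈ 𝒯} => m σ.1 τ.1) r := by
    constructor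
    · intro σ τ hστ
      exact Finset.union_subset_union (Finset.image_subset_image hστ)
        (Finset.image_subset_image hστ)
    · intro σ τ hστ
      simp only [hr]
      have h1 : m (σ.1.image p.1 ∪ σ.1.image q.1) (τ.1.image p.1 ∪ τ.1.image q.1) *
          m (σ.1.image p.1) (σ.1.image p.1 ∪ σ.1.image q.1)
          = m (σ.1.image p.1) (τ.1.image p.1 ∪ τ.1.image q.1) :=
        hm.2.1 _ _ _ (hp.1 σ.1 σ.2) (hunion σ.1 σ.2) (hunion τ.1 τ.2)
          Finset.subset_union_left
          (Finset.union_subset_union (Finset.image_subset_image hστ)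
            (Finset.image_subset_image hστ))
      have h2 : m (τ.1.image p.1) (τ.1.image p.1 ∪ τ.1.image q.1) *
          m (σ.1.image p.1) (τ.1.image p.1)
          = m (σ.1.image p.1) (τ.1.image p.1 ∪ τ.1.image q.1) :=
        hm.2.1 _ _ _ (hp.1 σ.1 σ.2) (hp.1 τ.1 τ.2) (hunion τ.1 τ.2)
          (Finset.image_subset_image hστ) Finset.subset_union_left
      have h3 := hp.2 σ.1 τ.1 σ.2 τ.2 hστ
      calc m (σ.1.image p.1 ∪ σ.1.image q.1) (τ.1.image p.1 ∪ τ.1.image q.1) *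
            (m (σ.1.image p.1) (σ.1.image p.1 ∪ σ.1.image q.1) * p.2 σ.1)
          = m (σ.1.image p.1) (τ.1.image p.1 ∪ τ.1.image q.1) * p.2 σ.1 := by
            rw [← mul_assoc, h1]
        _ = m (τ.1.image p.1) (τ.1.image p.1 ∪ τ.1.image q.1) *
            (m (σ.1.image p.1) (τ.1.image p.1) * p.2 σ.1) := by
            rw [← mul_assoc, h2]
        _ = m (τ.1.image p.1) (τ.1.image p.1 ∪ τ.1.image q.1) * (p.2 τ.1 * l σ.1 τ.1) := by
            rw [h3]
        _ = m (τ.1.image p.1) (τ.1.image p.1 ∪ τ.1.image q.1) * p.2 τ.1 * l σ.1 τ.1 := by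
            rw [mul_assoc]
  have step1 : PComparable (fun σ τ : {σ : Finset S // σ ∈ 𝒮} => l σ.1 τ.1)
      (fun σ τ : {τ : Finset T // τ ∈ 𝒯} => m σ.1 τ.1) (PiMor 𝒮 𝒯 p hp.1) r :=
    ⟨piMor_isPHom 𝒮 𝒯 l m hm hp, hrhom,
      Or.inl ⟨fun σ => Finset.subset_union_left, fun σ => rfl⟩⟩
  have step2 : PComparable (fun σ τ : {σ : Finset S // σ ∈ 𝒮} => l σ.1 τ.1)
      (fun σ τ : {τ : Finset T // τ ∈ 𝒯} => m σ.1 τ.1) (PiMor 𝒮 𝒯 q hq.1) r :=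
    ⟨piMor_isPHom 𝒮 𝒯 l m hm hq, hrhom,
      Or.inl ⟨fun σ => Finset.subset_union_right, fun σ => (hcon σ.1 σ.2).symm⟩⟩
  exact Relation.ReflTransGen.head step1
    (Relation.ReflTransGen.single ⟨hrhom, piMor_isPHom 𝒮 𝒯 l m hm hq,
      Or.inr ⟨fun σ => Finset.subset_union_right, fun σ => (hcon σ.1 σ.2).symm⟩⟩)

end Aux

/-- the functor `Π`, sending `(S,𝒮,l)` to the `A`-monomial poset `(𝒮,l)`
(with `𝒮` ordered by inclusion) and `(f,λ)` to `(σ ↦ f(σ), λ)`, preserves homotopy. -/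
theorem stmt16 {A S T : Type*} [Group A] [DecidableEq T]
    (𝒮 : Set (Finset S)) (𝒯 : Set (Finset T))
    (l : Finset S → Finset S → A) (m : Finset T → Finset T → A)
    (hl : IsMonomialSC 𝒮 l) (hm : IsMonomialSC 𝒯 m)
    (f f' : S → T) (lam lam' : Finset S → A)
    (hp : IsSHom 𝒮 𝒯 l m (f, lam)) (hp' : IsSHom 𝒮 𝒯 l m (f', lam'))
    (h : SHomotopic 𝒮 𝒯 l m (f, lam) (f', lam')) :
    PHomotopic (fun σ τ : {σ : Finset S // σ ∈ 𝒮} => l σ.1 τ.1)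
      (fun σ τ : {τ : Finset T // τ ∈ 𝒯} => m σ.1 τ.1)
      ((fun σ : {σ : Finset S // σ ∈ 𝒮} =>
          (⟨σ.1.image f, hp.1 σ.1 σ.2⟩ : {τ : Finset T // τ ∈ 𝒯})),
        fun σ : {σ : Finset S // σ ∈ 𝒮} => lam σ.1)
      ((fun σ : {σ : Finset S // σ ∈ 𝒮} =>
          (⟨σ.1.image f', hp'.1 σ.1 σ.2⟩ : {τ : Finset T // τ ∈ 𝒯})),
        fun σ : {σ : Finset S // σ ∈ 𝒮} => lam' σ.1) := by
  have main : ∀ q : (S → T) × (Finset S → A), SHomotopic 𝒮 𝒯 l m (f, lam) q →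
      ∀ hq : ∀ σ ∈ 𝒮, σ.image q.1 ∈ 𝒯,
        PHomotopic (fun σ τ : {σ : Finset S // σ ∈ 𝒮} => l σ.1 τ.1)
          (fun σ τ : {τ : Finset T // τ ∈ 𝒯} => m σ.1 τ.1)
          (PiMor 𝒮 𝒯 (f, lam) hp.1) (PiMor 𝒮 𝒯 q hq) := by
    intro q hq
    induction hq with
    | refl => intro _; exact Relation.ReflTransGen.refl
    | tail hab hbc ih =>
      intro hq
      exact (ih hbc.1.1).trans (contig_step 𝒮 𝒯 l m hm hbc)
  exact main (f', lam') h hp'.1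
end

section
/- Let (f,λ), (f',λ') : (S,𝒮,l) → (T,𝒯,m) be contiguous morphisms of A-monomial simplicial complexes, i.e., (f,λ) − (f',λ'). Define f∪f' : 𝒮 → 𝒯 by (f∪f')(σ) = f(σ) ∪ f'(σ) and η : 𝒮 → A by η(σ) = m(f'(σ), f(σ)∪f'(σ))·λ'(σ). Then (f∪f', η) is a morphism (𝒮,l) → (𝒯,m) of A-monomial posets (with 𝒮, 𝒯 ordered by inclusion), and (σ ↦ f(σ), λ) ≤ (f∪f', η) and (σ ↦ f'(σ), λ') ≤ (f∪f', η) as morphisms of A-monomial posets. -/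
/-- if `(f,λ) − (f',λ')` are contiguous morphisms of `A`-monomial
simplicial complexes, then `(f∪f', η)` with `(f∪f')(σ) = f(σ) ∪ f'(σ)` and
`η(σ) = m(f'(σ), f(σ)∪f'(σ))·λ'(σ)` is a morphism `(𝒮,l) → (𝒯,m)` of `A`-monomial
posets (`𝒮`, `𝒯` ordered by inclusion), with `Π(f,λ) ≤ (f∪f',η)` and
`Π(f',λ') ≤ (f∪f',η)`. -/
theorem stmt17 {A S T : Type*} [Group A] [DecidableEq T]
    (𝒮 : Set (Finset S)) (𝒯 : Set (Finset T))
    (l : Finset S → Finset S → A) (m : Finset T → Finset T → A)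
    (hl : IsMonomialSC 𝒮 l) (hm : IsMonomialSC 𝒯 m)
    (f f' : S → T) (lam lam' : Finset S → A)
    (hp : IsSHom 𝒮 𝒯 l m (f, lam)) (hp' : IsSHom 𝒮 𝒯 l m (f', lam'))
    (hc : SContig 𝒮 𝒯 m (f, lam) (f', lam')) :
    IsPHom (fun σ τ : {σ : Finset S // σ ∈ 𝒮} => l σ.1 τ.1)
        (fun σ τ : {τ : Finset T // τ ∈ 𝒯} => m σ.1 τ.1)
        ((fun σ : {σ : Finset S // σ ∈ 𝒮} =>
            (⟨σ.1.image f ∪ σ.1.image f', hc.1 σ.1 σ.2⟩ : {τ : Finset T // τ ∈ 𝒯})),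
          fun σ : {σ : Finset S // σ ∈ 𝒮} =>
            m (σ.1.image f') (σ.1.image f ∪ σ.1.image f') * lam' σ.1) ∧
      PLe (fun σ τ : {τ : Finset T // τ ∈ 𝒯} => m σ.1 τ.1)
        ((fun σ : {σ : Finset S // σ ∈ 𝒮} =>
            (⟨σ.1.image f, hp.1 σ.1 σ.2⟩ : {τ : Finset T // τ ∈ 𝒯})),
          fun σ : {σ : Finset S // σ ∈ 𝒮} => lam σ.1)
        ((fun σ : {σ : Finset S // σ ∈ 𝒮} =>
            (⟨σ.1.image f ∪ σ.1.image f', hc.1 σ.1 σ.2⟩ : {τ : Finset T // τ ∈ 𝒯})),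
          fun σ : {σ : Finset S // σ ∈ 𝒮} =>
            m (σ.1.image f') (σ.1.image f ∪ σ.1.image f') * lam' σ.1) ∧
      PLe (fun σ τ : {τ : Finset T // τ ∈ 𝒯} => m σ.1 τ.1)
        ((fun σ : {σ : Finset S // σ ∈ 𝒮} =>
            (⟨σ.1.image f', hp'.1 σ.1 σ.2⟩ : {τ : Finset T // τ ∈ 𝒯})),
          fun σ : {σ : Finset S // σ ∈ 𝒮} => lam' σ.1)
        ((fun σ : {σ : Finset S // σ ∈ 𝒮} =>
            (⟨σ.1.image f ∪ σ.1.image f', hc.1 σ.1 σ.2⟩ : {τ : Finset T // τ ∈ 𝒯})),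
          fun σ : {σ : Finset S // σ ∈ 𝒮} =>
            m (σ.1.image f') (σ.1.image f ∪ σ.1.image f') * lam' σ.1) := by
  obtain ⟨hT𝒮, hmmul, hmone⟩ := hm
  refine ⟨⟨?_, ?_⟩, ⟨?_, ?_⟩, ⟨?_, ?_⟩⟩
  · intro σ τ hst
    exact Finset.union_subset_union (Finset.image_subset_image hst)
      (Finset.image_subset_image hst)
  · intro σ τ hst
    simp only
    have h1 : σ.1.image f' ⊆ τ.1.image f' := Finset.image_subset_image hst
    have h2 : τ.1.image f' ⊆ τ.1.image f ∪ τ.1.image f' := Finset.subset_union_right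
    have h3 : σ.1.image f' ⊆ σ.1.image f ∪ σ.1.image f' := Finset.subset_union_right
    have h4 : σ.1.image f ∪ σ.1.image f' ⊆ τ.1.image f ∪ τ.1.image f' :=
      Finset.union_subset_union (Finset.image_subset_image hst)
        (Finset.image_subset_image hst)
    have e1 := hmmul (σ.1.image f') (σ.1.image f ∪ σ.1.image f')
      (τ.1.image f ∪ τ.1.image f') (hp'.1 σ.1 σ.2) (hc.1 σ.1 σ.2) (hc.1 τ.1 τ.2) h3 h4
    have e2 := hmmul (σ.1.image f') (τ.1.image f') (τ.1.image f ∪ τ.1.image f')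
      (hp'.1 σ.1 σ.2) (hp'.1 τ.1 τ.2) (hc.1 τ.1 τ.2) h1 h2
    have e3 := hp'.2 σ.1 τ.1 σ.2 τ.2 hst
    calc m (σ.1.image f ∪ σ.1.image f') (τ.1.image f ∪ τ.1.image f') *
          (m (σ.1.image f') (σ.1.image f ∪ σ.1.image f') * lam' σ.1)
        = m (σ.1.image f') (τ.1.image f ∪ τ.1.image f') * lam' σ.1 := by
          rw [← e1, mul_assoc]
      _ = m (τ.1.image f') (τ.1.image f ∪ τ.1.image f') *
          (m (σ.1.image f') (τ.1.image f') * lam' σ.1) := by rw [← e2, mul_assoc]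
      _ = m (τ.1.image f') (τ.1.image f ∪ τ.1.image f') * lam' τ.1 * l σ.1 τ.1 := by
          rw [e3]; group
  · intro σ
    exact Finset.subset_union_left
  · intro σ
    exact hc.2 σ.1 σ.2
  · intro σ
    exact Finset.subset_union_right
  · intro σ
    rfl
end

section
/- Let (f,λ), (f',λ') : (S,𝒮,l) → (T,𝒯,m) be morphisms of A-monomial simplicial complexes such that Π(f,λ) and Π(f',λ') are homotopic morphisms (𝒮,l) → (𝒯,m) of A-monomial posets. Then (f,λ) and (f',λ') are homotopic in Simp^A. In particular, if Π(f,λ) ≤ Π(f',λ') then (f,λ) − (f',λ'). -/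
/-- Unpacked dominance `Π p ≤ q` of a poset morphism over a simplicial morphism. -/
def SDom {A S T : Type*} [Group A] [DecidableEq T]
    (𝒮 : Set (Finset S)) (𝒯 : Set (Finset T)) (m : Finset T → Finset T → A)
    (p : (S → T) × (Finset S → A))
    (q : ({σ : Finset S // σ ∈ 𝒮} → {τ : Finset T // τ ∈ 𝒯}) ×
      ({σ : Finset S // σ ∈ 𝒮} → A)) : Prop :=
  ∀ σ : {σ : Finset S // σ ∈ 𝒮}, σ.1.image p.1 ⊆ (q.1 σ).1 ∧
    m (σ.1.image p.1) (q.1 σ).1 * p.2 σ.1 = q.2 σ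

theorem contig_of_dom {A S T : Type*} [Group A] [DecidableEq T]
    {𝒮 : Set (Finset S)} {𝒯 : Set (Finset T)}
    {l : Finset S → Finset S → A} {m : Finset T → Finset T → A}
    (hl : IsMonomialSC 𝒮 l) (hm : IsMonomialSC 𝒯 m)
    {p1 p2 : (S → T) × (Finset S → A)}
    (hp1 : IsSHom 𝒮 𝒯 l m p1) (hp2 : IsSHom 𝒮 𝒯 l m p2)
    {q : ({σ : Finset S // σ ∈ 𝒮} → {τ : Finset T // τ ∈ 𝒯}) ×
      ({σ : Finset S // σ ∈ 𝒮} → A)}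
    (h1 : SDom 𝒮 𝒯 m p1 q) (h2 : SDom 𝒮 𝒯 m p2 q) :
    SContig 𝒮 𝒯 m p1 p2 := by
  have hU : ∀ σ (hσ : σ ∈ 𝒮),
      σ.image p1.1 ∪ σ.image p2.1 ⊆ (q.1 ⟨σ, hσ⟩).1 := by
    intro σ hσ
    exact Finset.union_subset (h1 ⟨σ, hσ⟩).1 (h2 ⟨σ, hσ⟩).1
  have hUmem : ∀ σ ∈ 𝒮, σ.image p1.1 ∪ σ.image p2.1 ∈ 𝒯 := by
    intro σ hσ
    exact hm.1.2.2 _ (q.1 ⟨σ, hσ⟩).2 _ (hU σ hσ)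
      (((hl.1.1 σ hσ).image p1.1).mono Finset.subset_union_left)
  refine ⟨hUmem, fun σ hσ => ?_⟩
  have hne := hl.1.1 σ hσ
  have him1 : σ.image p1.1 ∈ 𝒯 := hp1.1 σ hσ
  have him2 : σ.image p2.1 ∈ 𝒯 := hp2.1 σ hσ
  have hc1 : m (σ.image p1.1 ∪ σ.image p2.1) (q.1 ⟨σ, hσ⟩).1 *
      m (σ.image p1.1) (σ.image p1.1 ∪ σ.image p2.1) =
      m (σ.image p1.1) (q.1 ⟨σ, hσ⟩).1 :=
    hm.2.1 _ _ _ him1 (hUmem σ hσ) (q.1 ⟨σ, hσ⟩).2 Finset.subset_union_left (hU σ hσ)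
  have hc2 : m (σ.image p1.1 ∪ σ.image p2.1) (q.1 ⟨σ, hσ⟩).1 *
      m (σ.image p2.1) (σ.image p1.1 ∪ σ.image p2.1) =
      m (σ.image p2.1) (q.1 ⟨σ, hσ⟩).1 :=
    hm.2.1 _ _ _ him2 (hUmem σ hσ) (q.1 ⟨σ, hσ⟩).2 Finset.subset_union_right (hU σ hσ)
  have e1 : m (σ.image p1.1 ∪ σ.image p2.1) (q.1 ⟨σ, hσ⟩).1 *
      (m (σ.image p1.1) (σ.image p1.1 ∪ σ.image p2.1) * p1.2 σ) = q.2 ⟨σ, hσ⟩ := by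
    rw [← mul_assoc, hc1]; exact (h1 ⟨σ, hσ⟩).2
  have e2 : m (σ.image p1.1 ∪ σ.image p2.1) (q.1 ⟨σ, hσ⟩).1 *
      (m (σ.image p2.1) (σ.image p1.1 ∪ σ.image p2.1) * p2.2 σ) = q.2 ⟨σ, hσ⟩ := by
    rw [← mul_assoc, hc2]; exact (h2 ⟨σ, hσ⟩).2
  exact mul_left_cancel (e1.trans e2.symm)

theorem dom_trans {A S T : Type*} [Group A] [DecidableEq T]
    {𝒮 : Set (Finset S)} {𝒯 : Set (Finset T)}
    {l : Finset S → Finset S → A} {m : Finset T → Finset T → A}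
    (_hl : IsMonomialSC 𝒮 l) (hm : IsMonomialSC 𝒯 m)
    {p : (S → T) × (Finset S → A)} (hp : IsSHom 𝒮 𝒯 l m p)
    {q q' : ({σ : Finset S // σ ∈ 𝒮} → {τ : Finset T // τ ∈ 𝒯}) ×
      ({σ : Finset S // σ ∈ 𝒮} → A)}
    (hd : SDom 𝒮 𝒯 m p q)
    (hle : PLe (fun σ τ : {τ : Finset T // τ ∈ 𝒯} => m σ.1 τ.1) q q') :
    SDom 𝒮 𝒯 m p q' := by
  intro σ
  have hsub : (q.1 σ).1 ⊆ (q'.1 σ).1 := hle.1 σ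
  have hsub2 : σ.1.image p.1 ⊆ (q'.1 σ).1 := (hd σ).1.trans hsub
  refine ⟨hsub2, ?_⟩
  have hc : m (q.1 σ).1 (q'.1 σ).1 * m (σ.1.image p.1) (q.1 σ).1 =
      m (σ.1.image p.1) (q'.1 σ).1 :=
    hm.2.1 _ _ _ (hp.1 σ.1 σ.2) (q.1 σ).2 (q'.1 σ).2 (hd σ).1 hsub
  calc m (σ.1.image p.1) (q'.1 σ).1 * p.2 σ.1
      = m (q.1 σ).1 (q'.1 σ).1 * (m (σ.1.image p.1) (q.1 σ).1 * p.2 σ.1) := by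
        rw [← mul_assoc, hc]
    _ = m (q.1 σ).1 (q'.1 σ).1 * q.2 σ := by rw [(hd σ).2]
    _ = q'.2 σ := hle.2 σ

theorem exists_dom {A S T : Type*} [Group A] [DecidableEq T]
    {𝒮 : Set (Finset S)} {𝒯 : Set (Finset T)}
    {l : Finset S → Finset S → A} {m : Finset T → Finset T → A}
    (hl : IsMonomialSC 𝒮 l) (hm : IsMonomialSC 𝒯 m)
    {q : ({σ : Finset S // σ ∈ 𝒮} → {τ : Finset T // τ ∈ 𝒯}) ×
      ({σ : Finset S // σ ∈ 𝒮} → A)}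
    (hq : IsPHom (fun σ τ : {σ : Finset S // σ ∈ 𝒮} => l σ.1 τ.1)
      (fun σ τ : {τ : Finset T // τ ∈ 𝒯} => m σ.1 τ.1) q) :
    ∃ p, IsSHom 𝒮 𝒯 l m p ∧ SDom 𝒮 𝒯 m p q := by
  classical
  set gf : S → T := fun s => (hm.1.1 _ (q.1 ⟨{s}, hl.1.2.1 s⟩).2).choose with hgf
  have hgfmem : ∀ s : S, gf s ∈ (q.1 ⟨{s}, hl.1.2.1 s⟩).1 := fun s =>
    (hm.1.1 _ (q.1 ⟨{s}, hl.1.2.1 s⟩).2).choose_spec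
  have hsub : ∀ (σ : Finset S) (hσ : σ ∈ 𝒮), σ.image gf ⊆ (q.1 ⟨σ, hσ⟩).1 := by
    intro σ hσ t ht
    obtain ⟨s, hs, rfl⟩ := Finset.mem_image.1 ht
    have hle : (⟨{s}, hl.1.2.1 s⟩ : {σ : Finset S // σ ∈ 𝒮}) ≤ ⟨σ, hσ⟩ := by
      exact Finset.singleton_subset_iff.2 hs
    exact hq.1 hle (hgfmem s)
  have himg : ∀ (σ : Finset S), σ ∈ 𝒮 → σ.image gf ∈ 𝒯 := by
    intro σ hσ
    exact hm.1.2.2 _ (q.1 ⟨σ, hσ⟩).2 _ (hsub σ hσ) ((hl.1.1 σ hσ).image gf)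
  set glam : Finset S → A := fun σ =>
    if h : σ ∈ 𝒮 then (m (σ.image gf) (q.1 ⟨σ, h⟩).1)⁻¹ * q.2 ⟨σ, h⟩ else 1 with hglam
  have hdom : SDom 𝒮 𝒯 m (gf, glam) q := by
    intro σ
    refine ⟨hsub σ.1 σ.2, ?_⟩
    show m (σ.1.image gf) (q.1 ⟨σ.1, σ.2⟩).1 * glam σ.1 = q.2 σ
    rw [hglam]
    simp only [dif_pos σ.2, mul_inv_cancel_left]
  refine ⟨(gf, glam), ⟨himg, ?_⟩, hdom⟩
  intro σ τ hσ hτ hst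
  show m (σ.image gf) (τ.image gf) * glam σ = glam τ * l σ τ
  rw [hglam]
  simp only [dif_pos hσ, dif_pos hτ]
  have hle : (⟨σ, hσ⟩ : {σ : Finset S // σ ∈ 𝒮}) ≤ ⟨τ, hτ⟩ := hst
  have hqm : m (q.1 ⟨σ, hσ⟩).1 (q.1 ⟨τ, hτ⟩).1 * q.2 ⟨σ, hσ⟩ =
      q.2 ⟨τ, hτ⟩ * l σ τ := hq.2 _ _ hle
  have hab : σ.image gf ⊆ τ.image gf := Finset.image_subset_image hst
  have huv : (q.1 ⟨σ, hσ⟩).1 ⊆ (q.1 ⟨τ, hτ⟩).1 := hq.1 hle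
  have h1 : m (τ.image gf) (q.1 ⟨τ, hτ⟩).1 * m (σ.image gf) (τ.image gf) =
      m (σ.image gf) (q.1 ⟨τ, hτ⟩).1 :=
    hm.2.1 _ _ _ (himg σ hσ) (himg τ hτ) (q.1 ⟨τ, hτ⟩).2 hab (hsub τ hτ)
  have h2 : m (q.1 ⟨σ, hσ⟩).1 (q.1 ⟨τ, hτ⟩).1 * m (σ.image gf) (q.1 ⟨σ, hσ⟩).1 =
      m (σ.image gf) (q.1 ⟨τ, hτ⟩).1 :=
    hm.2.1 _ _ _ (himg σ hσ) (q.1 ⟨σ, hσ⟩).2 (q.1 ⟨τ, hτ⟩).2 (hsub σ hσ) huv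
  have key : m (σ.image gf) (τ.image gf) * (m (σ.image gf) (q.1 ⟨σ, hσ⟩).1)⁻¹ =
      (m (τ.image gf) (q.1 ⟨τ, hτ⟩).1)⁻¹ * m (q.1 ⟨σ, hσ⟩).1 (q.1 ⟨τ, hτ⟩).1 := by
    have : m (τ.image gf) (q.1 ⟨τ, hτ⟩).1 * m (σ.image gf) (τ.image gf) =
        m (q.1 ⟨σ, hσ⟩).1 (q.1 ⟨τ, hτ⟩).1 * m (σ.image gf) (q.1 ⟨σ, hσ⟩).1 :=
      h1.trans h2.symm
    have h3 : m (τ.image gf) (q.1 ⟨τ, hτ⟩).1 *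
        (m (σ.image gf) (τ.image gf) * (m (σ.image gf) (q.1 ⟨σ, hσ⟩).1)⁻¹) =
        m (q.1 ⟨σ, hσ⟩).1 (q.1 ⟨τ, hτ⟩).1 := by
      rw [← mul_assoc, this, mul_inv_cancel_right]
    rw [← h3, ← mul_assoc, inv_mul_cancel, one_mul]
  calc m (σ.image gf) (τ.image gf) *
        ((m (σ.image gf) (q.1 ⟨σ, hσ⟩).1)⁻¹ * q.2 ⟨σ, hσ⟩)
      = (m (σ.image gf) (τ.image gf) * (m (σ.image gf) (q.1 ⟨σ, hσ⟩).1)⁻¹) *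
        q.2 ⟨σ, hσ⟩ := by rw [mul_assoc]
    _ = (m (τ.image gf) (q.1 ⟨τ, hτ⟩).1)⁻¹ *
        (m (q.1 ⟨σ, hσ⟩).1 (q.1 ⟨τ, hτ⟩).1 * q.2 ⟨σ, hσ⟩) := by rw [key, mul_assoc]
    _ = (m (τ.image gf) (q.1 ⟨τ, hτ⟩).1)⁻¹ * (q.2 ⟨τ, hτ⟩ * l σ τ) := by rw [hqm]
    _ = (m (τ.image gf) (q.1 ⟨τ, hτ⟩).1)⁻¹ * q.2 ⟨τ, hτ⟩ * l σ τ := by rw [mul_assoc]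

/-- the functor `Π` reflects homotopy: if `Π(f,λ)` and `Π(f',λ')` are
homotopic morphisms `(𝒮,l) → (𝒯,m)` of `A`-monomial posets, then `(f,λ)` and `(f',λ')`
are homotopic in `Simp^A`; in particular, if `Π(f,λ) ≤ Π(f',λ')` then
`(f,λ) − (f',λ')`. -/
theorem stmt18 {A S T : Type*} [Group A] [DecidableEq T]
    (𝒮 : Set (Finset S)) (𝒯 : Set (Finset T))
    (l : Finset S → Finset S → A) (m : Finset T → Finset T → A)
    (hl : IsMonomialSC 𝒮 l) (hm : IsMonomialSC 𝒯 m)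
    (f f' : S → T) (lam lam' : Finset S → A)
    (hp : IsSHom 𝒮 𝒯 l m (f, lam)) (hp' : IsSHom 𝒮 𝒯 l m (f', lam'))
    (h : PHomotopic (fun σ τ : {σ : Finset S // σ ∈ 𝒮} => l σ.1 τ.1)
      (fun σ τ : {τ : Finset T // τ ∈ 𝒯} => m σ.1 τ.1)
      ((fun σ : {σ : Finset S // σ ∈ 𝒮} =>
          (⟨σ.1.image f, hp.1 σ.1 σ.2⟩ : {τ : Finset T // τ ∈ 𝒯})),
        fun σ : {σ : Finset S // σ ∈ 𝒮} => lam σ.1)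
      ((fun σ : {σ : Finset S // σ ∈ 𝒮} =>
          (⟨σ.1.image f', hp'.1 σ.1 σ.2⟩ : {τ : Finset T // τ ∈ 𝒯})),
        fun σ : {σ : Finset S // σ ∈ 𝒮} => lam' σ.1)) :
    SHomotopic 𝒮 𝒯 l m (f, lam) (f', lam') ∧
      (PLe (fun σ τ : {τ : Finset T // τ ∈ 𝒯} => m σ.1 τ.1)
        ((fun σ : {σ : Finset S // σ ∈ 𝒮} =>
            (⟨σ.1.image f, hp.1 σ.1 σ.2⟩ : {τ : Finset T // τ ∈ 𝒯})),
          fun σ : {σ : Finset S // σ ∈ 𝒮} => lam σ.1)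
        ((fun σ : {σ : Finset S // σ ∈ 𝒮} =>
            (⟨σ.1.image f', hp'.1 σ.1 σ.2⟩ : {τ : Finset T // τ ∈ 𝒯})),
          fun σ : {σ : Finset S // σ ∈ 𝒮} => lam' σ.1) →
        SContig 𝒮 𝒯 m (f, lam) (f', lam')) := by
  set P0 : ({σ : Finset S // σ ∈ 𝒮} → {τ : Finset T // τ ∈ 𝒯}) ×
      ({σ : Finset S // σ ∈ 𝒮} → A) :=
    ((fun σ : {σ : Finset S // σ ∈ 𝒮} =>
        (⟨σ.1.image f, hp.1 σ.1 σ.2⟩ : {τ : Finset T // τ ∈ 𝒯})),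
      fun σ : {σ : Finset S // σ ∈ 𝒮} => lam σ.1) with hP0
  set P1 : ({σ : Finset S // σ ∈ 𝒮} → {τ : Finset T // τ ∈ 𝒯}) ×
      ({σ : Finset S // σ ∈ 𝒮} → A) :=
    ((fun σ : {σ : Finset S // σ ∈ 𝒮} =>
        (⟨σ.1.image f', hp'.1 σ.1 σ.2⟩ : {τ : Finset T // τ ∈ 𝒯})),
      fun σ : {σ : Finset S // σ ∈ 𝒮} => lam' σ.1) with hP1
  have hdom0 : SDom 𝒮 𝒯 m (f, lam) P0 := by
    intro σ
    exact ⟨Finset.Subset.refl _, by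
      show m (σ.1.image f) (σ.1.image f) * lam σ.1 = lam σ.1
      rw [hm.2.2 _ (hp.1 σ.1 σ.2), one_mul]⟩
  have hdom1 : SDom 𝒮 𝒯 m (f', lam') P1 := by
    intro σ
    exact ⟨Finset.Subset.refl _, by
      show m (σ.1.image f') (σ.1.image f') * lam' σ.1 = lam' σ.1
      rw [hm.2.2 _ (hp'.1 σ.1 σ.2), one_mul]⟩
  have key : ∀ q', PHomotopic (fun σ τ : {σ : Finset S // σ ∈ 𝒮} => l σ.1 τ.1)
      (fun σ τ : {τ : Finset T // τ ∈ 𝒯} => m σ.1 τ.1) P0 q' →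
      ∃ pb, IsSHom 𝒮 𝒯 l m pb ∧ SDom 𝒮 𝒯 m pb q' ∧
        SHomotopic 𝒮 𝒯 l m (f, lam) pb := by
    intro q' hq'
    induction hq' with
    | refl => exact ⟨(f, lam), hp, hdom0, Relation.ReflTransGen.refl⟩
    | tail _ hbc ih =>
      obtain ⟨pb, hpb, hdb, hhb⟩ := ih
      obtain ⟨pc, hpc, hdc⟩ := exists_dom hl hm hbc.2.1
      have hcontig : SContig 𝒮 𝒯 m pb pc := by
        rcases hbc.2.2 with hle | hle
        · exact contig_of_dom hl hm hpb hpc (dom_trans hl hm hpb hdb hle) hdc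
        · exact contig_of_dom hl hm hpb hpc hdb (dom_trans hl hm hpc hdc hle)
      exact ⟨pc, hpc, hdc, hhb.tail ⟨hpb, hpc, hcontig⟩⟩
  constructor
  · obtain ⟨pb, hpb, hdb, hhb⟩ := key P1 h
    exact hhb.tail ⟨hpb, hp', contig_of_dom hl hm hpb hp' hdb hdom1⟩
  · intro hle
    have hdom01 : SDom 𝒮 𝒯 m (f, lam) P1 := fun σ => ⟨hle.1 σ, hle.2 σ⟩
    exact contig_of_dom hl hm hp hp' hdom01 hdom1
end
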